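/- For all natural numbers k and p with 1 ≤ k ≤ p, the factorial ratio satisfies (p−k)!/(p+k)! ≤ e^{2k+1} · p^{−2k}, where the inequality is between real numbers and e is Euler's number. -/

import Mathlib

open scoped Real

/-- Robbins-type upper bound from the antitone Stirling sequence. -/
lemma factorial_le_stirling_bound (n : ℕ) (hn : 1 ≤ n) :
    (Nat.factorial n : ℝ) ≤
      Real.exp 1 / Real.sqrt 2 * (Real.sqrt (2 * n) * ((n : ℝ) / Real.exp 1) ^ n) := by
  have h := Stirling.stirlingSeq'_antitone (Nat.zero_le (n - 1))
  have hn' : n - 1 + 1 = n := Nat.succ_pred_eq_of_pos hn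
  simp only [Function.comp, Nat.succ_eq_add_one, hn'] at h
  rw [Stirling.stirlingSeq_one] at h
  have hd : 0 < Real.sqrt (2 * n) * ((n : ℝ) / Real.exp 1) ^ n := by
    have : (0:ℝ) < n := by exact_mod_cast hn
    positivity
  have h2 : Stirling.stirlingSeq n ≤ Real.exp 1 / Real.sqrt 2 := h
  rw [Stirling.stirlingSeq, div_le_iff₀ hd] at h2
  exact h2

/-- Stirling lower bound: `√π √(2n) (n/e)^n ≤ n!` for all `n`. -/
lemma stirling_bound_le_factorial (n : ℕ) :
    Real.sqrt π * (Real.sqrt (2 * n) * ((n : ℝ) / Real.exp 1) ^ n) ≤ (Nat.factorial n : ℝ) := by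
  rcases Nat.eq_zero_or_pos n with h0 | hn
  · subst h0; simp
  · have htend : Filter.Tendsto (Stirling.stirlingSeq ∘ Nat.succ) Filter.atTop
        (nhds (Real.sqrt π)) :=
      Stirling.tendsto_stirlingSeq_sqrt_pi.comp (Filter.tendsto_add_atTop_nat 1)
    have h := Stirling.stirlingSeq'_antitone.le_of_tendsto htend (n - 1)
    have hn' : n - 1 + 1 = n := Nat.succ_pred_eq_of_pos hn
    simp only [Function.comp, Nat.succ_eq_add_one, hn'] at h
    have hd : 0 < Real.sqrt (2 * n) * ((n : ℝ) / Real.exp 1) ^ n := by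
      have : (0:ℝ) < n := by exact_mod_cast hn
      positivity
    rw [Stirling.stirlingSeq, le_div_iff₀ hd] at h
    exact h

/-- For all natural numbers `k` and `p` with `1 ≤ k ≤ p`, the factorial
ratio satisfies `(p−k)!/(p+k)! ≤ e^{2k+1} · p^{−2k}` (as real numbers), where `e` is
Euler's number. -/
theorem factorial_ratio_le_exp_mul_pow (k p : ℕ) (hk : 1 ≤ k) (hkp : k ≤ p) :
    ((Nat.factorial (p - k) : ℝ) / (Nat.factorial (p + k) : ℝ)) ≤
      Real.exp 1 ^ (2 * k + 1) * (p : ℝ) ^ (-(2 * k : ℤ)) := by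
  set q : ℕ := p - k with hqdef
  set N : ℕ := p + k with hNdef
  have hqN : q + 2 * k = N := by omega
  have hp1 : 1 ≤ p := le_trans hk hkp
  have hNfac : (0:ℝ) < Nat.factorial N := by exact_mod_cast Nat.factorial_pos N
  have hppos : (0:ℝ) < (p:ℝ) := by exact_mod_cast hp1
  have hppow : (0:ℝ) < (p:ℝ) ^ (2 * k) := by positivity
  have hepos : (0:ℝ) < Real.exp 1 := Real.exp_pos 1
  have hpN : (p:ℝ) ≤ (N:ℝ) := by exact_mod_cast Nat.le_add_right p k
  have hqNr : (q:ℝ) ≤ (N:ℝ) := by exact_mod_cast (by omega : q ≤ N)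
  -- the key multiplied-out inequality
  have key : (Nat.factorial q : ℝ) * (p:ℝ) ^ (2 * k) ≤
      Real.exp 1 ^ (2 * k + 1) * (Nat.factorial N : ℝ) := by
    have core : (q:ℝ) ^ q * (p:ℝ) ^ (2 * k) ≤ (N:ℝ) ^ N := by
      calc (q:ℝ) ^ q * (p:ℝ) ^ (2 * k)
          ≤ (N:ℝ) ^ q * (N:ℝ) ^ (2 * k) :=
            mul_le_mul (pow_le_pow_left₀ (Nat.cast_nonneg q) hqNr q)
              (pow_le_pow_left₀ (Nat.cast_nonneg p) hpN _) (by positivity) (by positivity)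
        _ = (N:ℝ) ^ (q + 2 * k) := (pow_add _ _ _).symm
        _ = (N:ℝ) ^ N := by rw [hqN]
    have hl := stirling_bound_le_factorial N
    have hsqrtpi : (1:ℝ) ≤ Real.sqrt π := Real.one_le_sqrt.mpr (by
      have := Real.pi_gt_three; linarith)
    have hsqrt2 : (1:ℝ) ≤ Real.sqrt 2 := Real.one_le_sqrt.mpr one_le_two
    have hsqrtN : (0:ℝ) ≤ Real.sqrt (2 * N) := Real.sqrt_nonneg _
    have heq : (Real.exp 1) ^ N = (Real.exp 1) ^ q * (Real.exp 1) ^ (2 * k) := by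
      rw [← pow_add, hqN]
    have inner : Real.exp 1 * ((q:ℝ) / Real.exp 1) ^ q * (p:ℝ) ^ (2 * k) ≤
        Real.exp 1 ^ (2 * k + 1) * ((N:ℝ) / Real.exp 1) ^ N := by
      calc Real.exp 1 * ((q:ℝ) / Real.exp 1) ^ q * (p:ℝ) ^ (2 * k)
          = ((q:ℝ) ^ q * (p:ℝ) ^ (2 * k)) * (Real.exp 1 / Real.exp 1 ^ q) := by
            rw [div_pow]; ring
        _ ≤ ((N:ℝ) ^ N) * (Real.exp 1 / Real.exp 1 ^ q) := by
            have : (0:ℝ) ≤ Real.exp 1 / Real.exp 1 ^ q := by positivity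
            exact mul_le_mul_of_nonneg_right core this
        _ = Real.exp 1 ^ (2 * k + 1) * ((N:ℝ) / Real.exp 1) ^ N := by
            rw [div_pow, heq, pow_succ]
            field_simp
    rcases Nat.eq_zero_or_pos q with hq0 | hq1
    · -- q = 0 : factorial q = 1
      have hN2k : N = 2 * k := by omega
      rw [hq0, Nat.factorial_zero, Nat.cast_one]
      have hstep : (p:ℝ) ^ (2 * k) ≤
          Real.exp 1 ^ (2 * k + 1) * ((N:ℝ) / Real.exp 1) ^ N := by
        have := inner
        rw [hq0, pow_zero, mul_one] at this
        calc (p:ℝ) ^ (2 * k) ≤ Real.exp 1 * (p:ℝ) ^ (2 * k) := by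
              nlinarith [Real.add_one_le_exp (1:ℝ), hppow.le]
          _ ≤ Real.exp 1 ^ (2 * k + 1) * ((N:ℝ) / Real.exp 1) ^ N := this
      have hone : (1:ℝ) ≤ Real.sqrt π * Real.sqrt (2 * N) := by
        have h2N : (1:ℝ) ≤ Real.sqrt (2 * N) := Real.one_le_sqrt.mpr (by
          have : (1:ℝ) ≤ (N:ℝ) := by exact_mod_cast (by omega : 1 ≤ N)
          linarith)
        nlinarith
      calc (1:ℝ) * (p:ℝ) ^ (2 * k) = (p:ℝ) ^ (2 * k) := one_mul _
        _ ≤ Real.exp 1 ^ (2 * k + 1) * ((N:ℝ) / Real.exp 1) ^ N := hstep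
        _ ≤ Real.exp 1 ^ (2 * k + 1) *
            (Real.sqrt π * (Real.sqrt (2 * N) * ((N:ℝ) / Real.exp 1) ^ N)) := by
            have hNe : (0:ℝ) ≤ ((N:ℝ) / Real.exp 1) ^ N := by positivity
            have h1 : ((N:ℝ) / Real.exp 1) ^ N ≤
                Real.sqrt π * (Real.sqrt (2 * N) * ((N:ℝ) / Real.exp 1) ^ N) := by
              nlinarith [hone]
            exact mul_le_mul_of_nonneg_left h1 (by positivity)
        _ ≤ Real.exp 1 ^ (2 * k + 1) * (Nat.factorial N : ℝ) := by
            exact mul_le_mul_of_nonneg_left hl (by positivity)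
    · -- q ≥ 1
      have hu := factorial_le_stirling_bound q hq1
      have hsqle : Real.sqrt (2 * q) ≤ Real.sqrt (2 * N) :=
        Real.sqrt_le_sqrt (by nlinarith)
      have hqe : (0:ℝ) ≤ ((q:ℝ) / Real.exp 1) ^ q := by positivity
      calc (Nat.factorial q : ℝ) * (p:ℝ) ^ (2 * k)
          ≤ (Real.exp 1 / Real.sqrt 2 * (Real.sqrt (2 * q) * ((q:ℝ) / Real.exp 1) ^ q)) *
              (p:ℝ) ^ (2 * k) := mul_le_mul_of_nonneg_right hu hppow.le
        _ ≤ (Real.exp 1 * (Real.sqrt (2 * N) * ((q:ℝ) / Real.exp 1) ^ q)) *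
              (p:ℝ) ^ (2 * k) := by
            have h1 : Real.exp 1 / Real.sqrt 2 ≤ Real.exp 1 :=
              div_le_self hepos.le hsqrt2
            have h2 : Real.sqrt (2 * q) * ((q:ℝ) / Real.exp 1) ^ q ≤
                Real.sqrt (2 * N) * ((q:ℝ) / Real.exp 1) ^ q :=
              mul_le_mul_of_nonneg_right hsqle hqe
            have h3 : (0:ℝ) ≤ Real.sqrt (2 * q) * ((q:ℝ) / Real.exp 1) ^ q := by positivity
            exact mul_le_mul_of_nonneg_right
              (mul_le_mul h1 h2 h3 hepos.le) hppow.le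
        _ = Real.sqrt (2 * N) * (Real.exp 1 * ((q:ℝ) / Real.exp 1) ^ q * (p:ℝ) ^ (2 * k)) := by
            ring
        _ ≤ Real.sqrt (2 * N) * (Real.exp 1 ^ (2 * k + 1) * ((N:ℝ) / Real.exp 1) ^ N) :=
            mul_le_mul_of_nonneg_left inner hsqrtN
        _ ≤ Real.exp 1 ^ (2 * k + 1) *
            (Real.sqrt π * (Real.sqrt (2 * N) * ((N:ℝ) / Real.exp 1) ^ N)) := by
            have hNe : (0:ℝ) ≤ ((N:ℝ) / Real.exp 1) ^ N := by positivity
            have hE : (0:ℝ) ≤ Real.exp 1 ^ (2 * k + 1) := by positivity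
            nlinarith [mul_nonneg (mul_nonneg hsqrtN hE) hNe]
        _ ≤ Real.exp 1 ^ (2 * k + 1) * (Nat.factorial N : ℝ) :=
            mul_le_mul_of_nonneg_left hl (by positivity)
  have hzp : (p:ℝ) ^ (-(2 * k : ℤ)) = ((p:ℝ) ^ (2 * k))⁻¹ := by
    rw [zpow_neg]
    norm_cast
  rw [hzp, ← div_eq_mul_inv, div_le_div_iff₀ hNfac hppow]
  exact key
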